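/- The additive topological monoid X = {0} ∪ [1, ∞) ⊆ ℝ (with the subspace topology and addition) is separable but there is no countable set S ⊆ X such that S + U + S = X for every neighborhood U of 0 in X. -/

import Mathlib

def Xmonoid : Set ℝ := {0} ∪ Set.Ici 1

def Xadd (a b : Xmonoid) : Xmonoid :=
  ⟨a.1 + b.1, by
    rcases a with ⟨x, hx | hx⟩ <;> rcases b with ⟨y, hy | hy⟩ <;>
      simp only [Set.mem_singleton_iff] at * <;>
      simp only [Xmonoid, Set.mem_union, Set.mem_singleton_iff, Set.mem_Ici] at *
    · left; simp [hx, hy]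
    · right; simpa [hx] using hy
    · right; simpa [hy] using hx
    · right; linarith⟩

theorem stmt19 :
    TopologicalSpace.SeparableSpace Xmonoid ∧
    ¬ ∃ S : Set Xmonoid, S.Countable ∧
        ∀ U ∈ nhds (⟨0, Or.inl rfl⟩ : Xmonoid),
          Set.image2 Xadd (Set.image2 Xadd S U) S = Set.univ := by
  constructor
  · infer_instance
  · rintro ⟨S, hSc, hS⟩
    -- {0} is a neighborhood of 0 in Xmonoid
    set z : Xmonoid := ⟨0, Or.inl rfl⟩
    have hU : ({z} : Set Xmonoid) ∈ nhds z := by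
      have ho : IsOpen ((Subtype.val : Xmonoid → ℝ) ⁻¹' Set.Iio 1) :=
        (isOpen_Iio).preimage continuous_subtype_val
      have heq : ((Subtype.val : Xmonoid → ℝ) ⁻¹' Set.Iio 1) = {z} := by
        ext ⟨x, hx⟩
        simp only [Set.mem_preimage, Set.mem_Iio, Set.mem_singleton_iff, z,
          Subtype.mk.injEq]
        constructor
        · intro h
          rcases hx with h0 | h1
          · exact Subtype.ext h0
          · exact absurd (Set.mem_Ici.mp h1) (by linarith)
        · intro h; replace h : x = 0 := congrArg Subtype.val h; rw [h]; norm_num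
      rw [← heq]
      exact ho.mem_nhds (by rw [heq]; rfl)
    have := hS _ hU
    have hc : (Set.univ : Set Xmonoid).Countable := by
      rw [← this]
      exact ((hSc.image2 (Set.countable_singleton z) _).image2 hSc _)
    have hIci : (Set.Ici (1:ℝ)).Countable := by
      have : (Subtype.val '' (Set.univ : Set Xmonoid)).Countable := hc.image _
      rw [Set.image_univ, Subtype.range_coe] at this
      exact this.mono Set.subset_union_right
    have : (Cardinal.mk (Set.Ici (1:ℝ))) ≤ Cardinal.aleph0 :=
      Cardinal.le_aleph0_iff_set_countable.mpr hIci
    rw [Cardinal.mk_Ici_real] at this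
    exact absurd this (by simpa using Cardinal.aleph0_lt_continuum.not_ge)
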